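/- Let $p \in (0,1)$, $q \in (0,\infty]$, and $\nu > d(1/p - 1)$. Define for measurable $H : \mathbb{N} \times \mathbb{R}^d \to [0,\infty]$ the quasinorm $\mathcal{N}(H) = \left( \sum_{k \ge 0} \left( 2^{\nu k} \left\| x \mapsto \fint_{B(x, 2^{-k})} H(k,y)\,dy \right\|_{L^p(\mathbb{R}^d)} \right)^q \right)^{1/q}$. Then there is a constant $C$ depending only on $d, p, \nu$ such that for every $l \in \mathbb{N}$, $\mathcal{N}\left( (k,x) \mapsto \fint_{|z-x| \le 2^{-k}} H(k+l, z)\,dz \right) \leq C\, 2^{-\gamma l} \mathcal{N}(H)$, where $\gamma = \nu - d(1/p-1) > 0$. -/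

import Mathlib

open MeasureTheory ENNReal

/-- `ℓ^q` (quasi)norm of a sequence in `ℝ≥0∞`, `q ∈ (0,∞]`,
with the usual modification for `q = ∞`. -/
noncomputable def lqNormE (q : ℝ≥0∞) (a : ℕ → ℝ≥0∞) : ℝ≥0∞ :=
  if q = ∞ then ⨆ k, a k
  else (∑' k, a k ^ q.toReal) ^ (1 / q.toReal)

/-- Average of an `ℝ≥0∞`-valued function over the ball `B(x, 2^{-k})`. -/
noncomputable def dyadicBallAvg {d : ℕ} (k : ℕ) (g : (Fin d → ℝ) → ℝ≥0∞)
    (x : Fin d → ℝ) : ℝ≥0∞ :=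
  (volume (Metric.ball x ((2 : ℝ) ^ (-(k : ℝ)))))⁻¹ *
    ∫⁻ z in Metric.ball x ((2 : ℝ) ^ (-(k : ℝ))), g z

/-- Besov-type quasinorm for `p < 1`, with an inner average:
`N(H) = ℓ^q_k 2^{νk} L^p_x ⨍_{B(x,2^{-k})} H(k,y) dy`. -/
noncomputable def besovNlt1 {d : ℕ} (p : ℝ) (q : ℝ≥0∞) (ν : ℝ)
    (H : ℕ → (Fin d → ℝ) → ℝ≥0∞) : ℝ≥0∞ :=
  lqNormE q (fun k =>
    (2 : ℝ≥0∞) ^ (ν * k) * (∫⁻ x, (dyadicBallAvg k (H k) x) ^ p) ^ (1 / p))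

section Aux

noncomputable def avgE {d : ℕ} (r : ℝ) (g : (Fin d → ℝ) → ℝ≥0∞) (x : Fin d → ℝ) : ℝ≥0∞ :=
  (volume (Metric.ball x r))⁻¹ * ∫⁻ z in Metric.ball x r, g z

variable {d : ℕ}

lemma dyadicBallAvg_eq_avgE (k : ℕ) (g : (Fin d → ℝ) → ℝ≥0∞) :
    dyadicBallAvg k g = avgE ((2:ℝ) ^ (-(k:ℝ))) g := rfl


lemma volB (x : Fin d → ℝ) {r : ℝ} (hr : 0 < r) :
    volume (Metric.ball x r) = ENNReal.ofReal ((2*r)^d) := by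
  rw [Real.volume_pi_ball x hr]; simp

lemma volB_ne_zero {r : ℝ} (hr : 0 < r) : ENNReal.ofReal ((2*r)^d) ≠ 0 := by
  simp only [ne_eq, ENNReal.ofReal_eq_zero, not_le]
  positivity

lemma measurable_avgE {r : ℝ} (hr : 0 < r) {g : (Fin d → ℝ) → ℝ≥0∞} (hg : Measurable g) :
    Measurable (avgE r g) := by
  have h1 : avgE r g = fun x => (ENNReal.ofReal ((2*r)^d))⁻¹ *
      ∫⁻ z, Set.indicator {p : (Fin d → ℝ) × (Fin d → ℝ) | dist p.2 p.1 < r}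
        (fun p => g p.2) (x, z) := by
    funext x
    rw [avgE, volB x hr]
    congr 1
    rw [← lintegral_indicator measurableSet_ball]
    refine lintegral_congr fun z => ?_
    by_cases hz : z ∈ Metric.ball x r
    · rw [Set.indicator_of_mem hz, Set.indicator_of_mem (by simpa [Metric.mem_ball] using hz)]
    · rw [Set.indicator_of_notMem hz, Set.indicator_of_notMem (by simpa [Metric.mem_ball] using hz)]
  rw [h1]
  apply Measurable.const_mul
  apply Measurable.lintegral_prod_right'
  exact (hg.comp measurable_snd).indicator
    ((isOpen_lt (continuous_snd.dist continuous_fst) continuous_const).measurableSet)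

lemma setLIntegral_ball_eq {r : ℝ} (hr : 0 < r) (g : (Fin d → ℝ) → ℝ≥0∞) (y : Fin d → ℝ) :
    ∫⁻ z in Metric.ball y r, g z = ENNReal.ofReal ((2*r)^d) * avgE r g y := by
  rw [avgE, volB y hr, ← mul_assoc, ENNReal.mul_inv_cancel (volB_ne_zero hr) ENNReal.ofReal_ne_top,
    one_mul]

lemma avgE_avgE_le {r : ℝ} (hr : 0 < r) (g : (Fin d → ℝ) → ℝ≥0∞) (x : Fin d → ℝ) :
    avgE r (avgE r g) x ≤ (2:ℝ≥0∞) ^ (d:ℝ) * avgE (2*r) g x := by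
  set V : ℝ≥0∞ := ENNReal.ofReal ((2*r)^d) with hV
  have hV0 : V ≠ 0 := volB_ne_zero hr
  have hVt : V ≠ ⊤ := ENNReal.ofReal_ne_top
  have h2r : (0:ℝ) < 2*r := by linarith
  have key : ∀ y ∈ Metric.ball x r, avgE r g y ≤ V⁻¹ * ∫⁻ z in Metric.ball x (2*r), g z := by
    intro y hy
    rw [avgE, volB y hr, ← hV]
    refine mul_le_mul_right (lintegral_mono_set ?_) _
    refine Metric.ball_subset_ball' ?_
    have := Metric.mem_ball.mp hy
    linarith
  have step : avgE r (avgE r g) x ≤ V⁻¹ * ∫⁻ z in Metric.ball x (2*r), g z := by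
    rw [avgE, volB x hr, ← hV]
    calc V⁻¹ * ∫⁻ y in Metric.ball x r, avgE r g y
        ≤ V⁻¹ * ∫⁻ _ in Metric.ball x r, (V⁻¹ * ∫⁻ z in Metric.ball x (2*r), g z) :=
          mul_le_mul_right (setLIntegral_mono' measurableSet_ball key) _
      _ = V⁻¹ * ((V⁻¹ * ∫⁻ z in Metric.ball x (2*r), g z) * V) := by
          rw [setLIntegral_const, volB x hr, ← hV]
      _ = V⁻¹ * ∫⁻ z in Metric.ball x (2*r), g z := by
          rw [mul_comm _ V, ← mul_assoc, ← mul_assoc, ENNReal.inv_mul_cancel hV0 hVt, one_mul]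
  refine step.trans_eq ?_
  rw [avgE, volB x h2r]
  have hV2 : ENNReal.ofReal ((2*(2*r))^d) = (2:ℝ≥0∞)^(d:ℝ) * V := by
    rw [mul_pow, ENNReal.ofReal_mul (by positivity), hV]
    congr 1
    rw [ENNReal.ofReal_pow zero_le_two, ← ENNReal.rpow_natCast]
    norm_num
  have h2ne : ((2:ℝ≥0∞)^(d:ℝ)) ≠ 0 := by simp
  have h2nt : ((2:ℝ≥0∞)^(d:ℝ)) ≠ ⊤ := by simp
  rw [hV2, ENNReal.mul_inv (Or.inl h2ne) (Or.inl h2nt),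
    mul_assoc ((2:ℝ≥0∞)^(d:ℝ))⁻¹ V⁻¹, ← mul_assoc ((2:ℝ≥0∞)^(d:ℝ)),
    ENNReal.mul_inv_cancel h2ne h2nt, one_mul]

lemma ball_subset_biUnion (x : Fin d → ℝ) {r R : ℝ} (hr : 0 < r) (n : ℕ)
    (hn : R ≤ n * r) :
    Metric.ball x R ⊆ ⋃ j ∈ Fintype.piFinset (fun _ : Fin d => Finset.Icc (-(n:ℤ)) n),
      Metric.ball (x + r • fun i => ((j i : ℤ) : ℝ)) r := by
  intro z hz
  have hz' : dist z x < R := Metric.mem_ball.mp hz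
  set j : Fin d → ℤ := fun i => round ((z i - x i) / r) with hjdef
  have habs : ∀ i, |(z i - x i) / r| < n := by
    intro i
    have h1 : |z i - x i| ≤ dist z x := by
      have := dist_le_pi_dist z x i; rwa [Real.dist_eq] at this
    rw [abs_div, abs_of_pos hr, div_lt_iff₀ hr]
    exact lt_of_le_of_lt h1 (lt_of_lt_of_le hz' hn)
  have hround : ∀ i, |(z i - x i) / r - (j i : ℝ)| ≤ 1/2 := fun i => abs_sub_round _
  simp only [Set.mem_iUnion]
  refine ⟨j, ?_, ?_⟩
  · rw [Fintype.mem_piFinset]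
    intro i
    rw [Finset.mem_Icc, ← abs_le]
    have h3 : |(j i : ℝ)| < (n : ℝ) + 1 := by
      calc |(j i : ℝ)| ≤ |(z i - x i)/r| + |(z i - x i)/r - (j i : ℝ)| := by
            have := abs_sub_abs_le_abs_sub ((j i : ℝ)) ((z i - x i)/r)
            have h4 := abs_sub_comm ((j i : ℝ)) ((z i - x i)/r)
            linarith [abs_nonneg ((z i - x i)/r - (j i:ℝ))]
        _ < (n : ℝ) + 1 := by linarith [habs i, hround i]
    have h4 : ((|j i| : ℤ) : ℝ) < (n:ℝ) + 1 := by rw [Int.cast_abs]; exact h3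
    have h5 : |j i| < (n:ℤ) + 1 := by exact_mod_cast h4
    omega
  · rw [Metric.mem_ball, dist_pi_lt_iff hr]
    intro i
    have : z i - (x + r • fun i => ((j i : ℤ) : ℝ)) i = r * ((z i - x i)/r - (j i : ℝ)) := by
      simp only [Pi.add_apply, Pi.smul_apply, smul_eq_mul]
      field_simp
      ring
    rw [Real.dist_eq, this, abs_mul, abs_of_pos hr]
    have := hround i
    nlinarith [hround i]

lemma lintegral_biUnion_le' {α ι : Type*} [MeasurableSpace α] (μ : Measure α)
    (J : Finset ι) (t : ι → Set α) (f : α → ℝ≥0∞) :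
    ∫⁻ x in ⋃ j ∈ J, t j, f x ∂μ ≤ ∑ j ∈ J, ∫⁻ x in t j, f x ∂μ := by
  classical
  induction J using Finset.induction with
  | empty => simp
  | insert _ _ h ih =>
      rw [Finset.set_biUnion_insert, Finset.sum_insert h]
      exact le_trans (lintegral_union_le _ _ _) (add_le_add le_rfl ih)

lemma rpow_finset_sum_le {ι : Type*} (J : Finset ι) (a : ι → ℝ≥0∞) {p : ℝ}
    (hp0 : 0 < p) (hp1 : p ≤ 1) :
    (∑ j ∈ J, a j) ^ p ≤ ∑ j ∈ J, a j ^ p := by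
  classical
  induction J using Finset.induction with
  | empty => simp [ENNReal.zero_rpow_of_pos hp0]
  | insert _ _ h ih =>
      rw [Finset.sum_insert h, Finset.sum_insert h]
      exact (ENNReal.rpow_add_le_add_rpow _ _ hp0.le hp1).trans (add_le_add le_rfl ih)

lemma card_piFinset_Icc (d n : ℕ) :
    (Fintype.piFinset (fun _ : Fin d => Finset.Icc (-(n:ℤ)) n)).card = (2*n+1)^d := by
  rw [Fintype.card_piFinset]
  simp [Int.card_Icc]
  congr 1
  omega

lemma lp_avg_le {p : ℝ} (hp0 : 0 < p) (hp1 : p ≤ 1)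
    {g : (Fin d → ℝ) → ℝ≥0∞} (hg : Measurable g) {r R : ℝ} (hr : 0 < r) (hR : 0 < R)
    (n : ℕ) (hn : R ≤ n * r) :
    ∫⁻ x, (avgE R g x) ^ p ≤
      (ENNReal.ofReal ((2*r)^d) * (ENNReal.ofReal ((2*R)^d))⁻¹) ^ p * (((2*n+1)^d : ℕ) : ℝ≥0∞) *
        ∫⁻ x, (avgE r g x) ^ p := by
  classical
  set J := Fintype.piFinset (fun _ : Fin d => Finset.Icc (-(n:ℤ)) n) with hJ
  set c : ℝ≥0∞ := ENNReal.ofReal ((2*r)^d) * (ENNReal.ofReal ((2*R)^d))⁻¹ with hc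
  have hct : c ≠ ⊤ := by
    rw [hc]
    exact ENNReal.mul_ne_top ENNReal.ofReal_ne_top (by simp [volB_ne_zero hR])
  have hcpt : c ^ p ≠ ⊤ := ENNReal.rpow_ne_top_of_nonneg hp0.le hct
  have hpt : ∀ x, (avgE R g x) ^ p ≤
      c ^ p * ∑ j ∈ J, (avgE r g (x + r • fun i => ((j i : ℤ) : ℝ))) ^ p := by
    intro x
    have h1 : avgE R g x ≤ c * ∑ j ∈ J, avgE r g (x + r • fun i => ((j i : ℤ) : ℝ)) := by
      rw [avgE, volB x hR]
      calc (ENNReal.ofReal ((2*R)^d))⁻¹ * ∫⁻ z in Metric.ball x R, g z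
          ≤ (ENNReal.ofReal ((2*R)^d))⁻¹ *
            ∑ j ∈ J, ∫⁻ z in Metric.ball (x + r • fun i => ((j i : ℤ) : ℝ)) r, g z := by
            refine mul_le_mul_right ?_ _
            refine le_trans (lintegral_mono_set (ball_subset_biUnion x hr n hn)) ?_
            exact lintegral_biUnion_le' _ _ _ _
        _ = c * ∑ j ∈ J, avgE r g (x + r • fun i => ((j i : ℤ) : ℝ)) := by
            rw [Finset.mul_sum, Finset.mul_sum]
            refine Finset.sum_congr rfl fun j _ => ?_
            rw [setLIntegral_ball_eq hr, hc]
            ring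
    calc (avgE R g x) ^ p
        ≤ (c * ∑ j ∈ J, avgE r g (x + r • fun i => ((j i : ℤ) : ℝ))) ^ p :=
          ENNReal.rpow_le_rpow h1 hp0.le
      _ = c ^ p * (∑ j ∈ J, avgE r g (x + r • fun i => ((j i : ℤ) : ℝ))) ^ p :=
          ENNReal.mul_rpow_of_nonneg _ _ hp0.le
      _ ≤ c ^ p * ∑ j ∈ J, (avgE r g (x + r • fun i => ((j i : ℤ) : ℝ))) ^ p :=
          mul_le_mul_right (rpow_finset_sum_le _ _ hp0 hp1) _
  calc ∫⁻ x, (avgE R g x) ^ p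
      ≤ ∫⁻ x, c ^ p * ∑ j ∈ J, (avgE r g (x + r • fun i => ((j i : ℤ) : ℝ))) ^ p :=
        lintegral_mono hpt
    _ = c ^ p * ∑ j ∈ J, ∫⁻ x, (avgE r g (x + r • fun i => ((j i : ℤ) : ℝ))) ^ p := by
        rw [lintegral_const_mul' _ _ hcpt, lintegral_finset_sum']
        intro j _
        exact (((measurable_avgE hr hg).comp (measurable_id.add_const _)).pow_const p).aemeasurable
    _ = c ^ p * ∑ _j ∈ J, ∫⁻ x, (avgE r g x) ^ p := by
        congr 1
        refine Finset.sum_congr rfl fun j _ => ?_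
        exact lintegral_add_right_eq_self (fun x => (avgE r g x) ^ p) _
    _ = c ^ p * (((2*n+1)^d : ℕ) : ℝ≥0∞) * ∫⁻ x, (avgE r g x) ^ p := by
        rw [Finset.sum_const, nsmul_eq_mul, show J.card = (2*n+1)^d from card_piFinset_Icc d n,
          mul_assoc]

lemma two_rpow_ofReal (y : ℝ) : ENNReal.ofReal ((2:ℝ) ^ y) = (2:ℝ≥0∞) ^ y := by
  rw [← ENNReal.ofReal_rpow_of_pos two_pos]
  norm_num

lemma two_mul_rpow (y : ℝ) : (2:ℝ) * 2^y = 2^(1+y) := by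
  rw [Real.rpow_add two_pos, Real.rpow_one]

lemma real_two_pow_nat (y : ℝ) (d : ℕ) : ((2:ℝ)^y)^d = (2:ℝ)^(y*(d:ℝ)) := by
  rw [Real.rpow_mul (by norm_num : (0:ℝ) ≤ 2), Real.rpow_natCast]

lemma key {p : ℝ} (hp0 : 0 < p) (hp1 : p ≤ 1) {f : (Fin d → ℝ) → ℝ≥0∞} (hf : Measurable f)
    (k l : ℕ) :
    (∫⁻ x, (avgE ((2:ℝ)^(-(k:ℝ))) (avgE ((2:ℝ)^(-(k:ℝ))) f) x) ^ p) ^ (1/p) ≤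
      (2:ℝ≥0∞) ^ ((d:ℝ) - ((l:ℝ)+1)*(d:ℝ) + (((l:ℝ)+3)*(d:ℝ))/p) *
        (∫⁻ x, (avgE ((2:ℝ)^(-((k+l:ℕ):ℝ))) f x) ^ p) ^ (1/p) := by
  set r : ℝ := (2:ℝ)^(-(k:ℝ)) with hrdef
  set r' : ℝ := (2:ℝ)^(-((k+l:ℕ):ℝ)) with hr'def
  have hr : 0 < r := Real.rpow_pos_of_pos two_pos _
  have hr' : 0 < r' := Real.rpow_pos_of_pos two_pos _
  have hR : 0 < 2*r := by linarith
  set n : ℕ := 2^(l+1) with hndef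
  have hn : 2*r = n * r' := by
    rw [hrdef, hr'def, hndef, two_mul_rpow]
    push_cast
    rw [← Real.rpow_natCast (2:ℝ) (l+1), ← Real.rpow_add two_pos]
    congr 1
    push_cast
    ring
  have stepA : ∫⁻ x, (avgE r (avgE r f) x) ^ p ≤
      ((2:ℝ≥0∞) ^ (d:ℝ)) ^ p * ∫⁻ x, (avgE (2*r) f x) ^ p := by
    rw [← lintegral_const_mul' _ _ (by simp : ((2:ℝ≥0∞)^(d:ℝ))^p ≠ ⊤)]
    refine lintegral_mono fun x => ?_
    rw [← ENNReal.mul_rpow_of_nonneg _ _ hp0.le]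
    exact ENNReal.rpow_le_rpow (avgE_avgE_le hr f x) hp0.le
  have stepB := lp_avg_le (d := d) hp0 hp1 hf hr' hR n (le_of_eq hn)
  have comb : ∫⁻ x, (avgE r (avgE r f) x) ^ p ≤
      ((2:ℝ≥0∞) ^ (d:ℝ)) ^ p *
        ((ENNReal.ofReal ((2*r')^d) * (ENNReal.ofReal ((2*(2*r))^d))⁻¹) ^ p *
          (((2*n+1)^d : ℕ) : ℝ≥0∞)) * ∫⁻ x, (avgE r' f x) ^ p := by
    refine stepA.trans ?_
    rw [mul_assoc, mul_assoc]
    exact mul_le_mul_right (by rw [← mul_assoc]; exact stepB) _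
  have hmono := ENNReal.rpow_le_rpow comb (by positivity : (0:ℝ) ≤ 1/p)
  refine le_trans hmono ?_
  have hinvp : p * (1/p) = 1 := by field_simp
  have hexp : ∀ x : ℝ≥0∞, (x ^ p) ^ (1/p) = x := by
    intro x
    rw [← ENNReal.rpow_mul, hinvp, ENNReal.rpow_one]
  rw [ENNReal.mul_rpow_of_nonneg _ _ (by positivity : (0:ℝ) ≤ 1/p),
      ENNReal.mul_rpow_of_nonneg _ _ (by positivity : (0:ℝ) ≤ 1/p), hexp]
  rw [← mul_assoc]
  refine mul_le_mul_left ?_ _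
  have hc : ENNReal.ofReal ((2*r')^d) * (ENNReal.ofReal ((2*2*r)^d))⁻¹ =
      (2:ℝ≥0∞) ^ (-((l:ℝ)+1)*(d:ℝ)) := by
    have h1 : (2*r' : ℝ) = (2:ℝ)^(1-((k:ℝ)+(l:ℝ))) := by
      rw [hr'def, two_mul_rpow]
      congr 1
      push_cast
      ring
    have h2 : (2*2*r : ℝ) = (2:ℝ)^(2-(k:ℝ)) := by
      rw [hrdef, show (2*2*(2:ℝ)^(-(k:ℝ)) : ℝ) = 2*(2*(2:ℝ)^(-(k:ℝ))) from by ring,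
        two_mul_rpow, two_mul_rpow]
      congr 1
      ring
    rw [h1, h2, real_two_pow_nat, real_two_pow_nat, two_rpow_ofReal, two_rpow_ofReal,
      ← ENNReal.rpow_neg, ← ENNReal.rpow_add _ _ (by norm_num) (by norm_num)]
    congr 1
    ring
  have hN : (((2*n+1)^d : ℕ) : ℝ≥0∞) ≤ (2:ℝ≥0∞) ^ (((l:ℝ)+3)*(d:ℝ)) := by
    have h1 : ((2*n+1)^d : ℕ) ≤ (2^(l+3))^d := by
      refine Nat.pow_le_pow_left ?_ _
      rw [hndef]
      have h2 : 1 ≤ 2^(l+1) := Nat.one_le_two_pow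
      calc 2*2^(l+1)+1 ≤ 2*2^(l+1) + 2*2^(l+1) := by omega
        _ = 2^(l+3) := by ring
    calc (((2*n+1)^d : ℕ) : ℝ≥0∞) ≤ (((2^(l+3))^d : ℕ) : ℝ≥0∞) := by exact_mod_cast h1
      _ = (2:ℝ≥0∞) ^ (((l:ℝ)+3)*(d:ℝ)) := by
          push_cast
          rw [← pow_mul, ← ENNReal.rpow_natCast 2 ((l+3)*d)]
          congr 1
          push_cast
          ring
  calc (2:ℝ≥0∞)^(d:ℝ) * ((ENNReal.ofReal ((2*r')^d) * (ENNReal.ofReal ((2*2*r)^d))⁻¹) ^ p *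
          (((2*n+1)^d : ℕ) : ℝ≥0∞)) ^ (1/p)
      ≤ (2:ℝ≥0∞)^(d:ℝ) * (((2:ℝ≥0∞) ^ (-((l:ℝ)+1)*(d:ℝ))) ^ p *
          ((2:ℝ≥0∞) ^ (((l:ℝ)+3)*(d:ℝ)))) ^ (1/p) := by
        rw [hc]
        exact mul_le_mul_right (ENNReal.rpow_le_rpow (mul_le_mul_right hN _) (by positivity)) _
    _ = (2:ℝ≥0∞) ^ ((d:ℝ) - ((l:ℝ)+1)*(d:ℝ) + (((l:ℝ)+3)*(d:ℝ))/p) := by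
        rw [ENNReal.mul_rpow_of_nonneg _ _ (by positivity : (0:ℝ) ≤ 1/p),
          ← ENNReal.rpow_mul, ← ENNReal.rpow_mul, ← ENNReal.rpow_mul,
          ← ENNReal.rpow_add _ _ (by norm_num) (by norm_num),
          ← ENNReal.rpow_add _ _ (by norm_num) (by norm_num)]
        congr 1
        field_simp
        ring

lemma lq_shift (q : ℝ≥0∞) (hq : 0 < q) (c : ℝ≥0∞) (a b : ℕ → ℝ≥0∞) (l : ℕ)
    (h : ∀ k, a k ≤ c * b (k + l)) : lqNormE q a ≤ c * lqNormE q b := by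
  unfold lqNormE
  split_ifs with hq'
  · exact iSup_le fun k => (h k).trans (mul_le_mul_right (le_iSup b (k+l)) c)
  · have hq0 : 0 < q.toReal := ENNReal.toReal_pos hq.ne' hq'
    calc (∑' k, a k ^ q.toReal) ^ (1/q.toReal)
        ≤ (∑' k, (c * b (k+l)) ^ q.toReal) ^ (1/q.toReal) := by
          refine ENNReal.rpow_le_rpow (ENNReal.tsum_le_tsum fun k => ?_) (by positivity)
          exact ENNReal.rpow_le_rpow (h k) hq0.le
      _ = (c ^ q.toReal * ∑' k, b (k+l) ^ q.toReal) ^ (1/q.toReal) := by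
          rw [← ENNReal.tsum_mul_left]
          congr 1
          refine tsum_congr fun k => ?_
          rw [ENNReal.mul_rpow_of_nonneg _ _ hq0.le]
      _ ≤ (c ^ q.toReal * ∑' k, b k ^ q.toReal) ^ (1/q.toReal) := by
          refine ENNReal.rpow_le_rpow (mul_le_mul_right ?_ _) (by positivity)
          exact Summable.tsum_le_tsum_of_inj (· + l) (add_left_injective l) (fun _ _ => zero_le)
            (fun k => le_rfl) ENNReal.summable ENNReal.summable
      _ = c * (∑' k, b k ^ q.toReal) ^ (1/q.toReal) := by
          rw [ENNReal.mul_rpow_of_nonneg _ _ (by positivity : (0:ℝ) ≤ 1/q.toReal),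
            ← ENNReal.rpow_mul, mul_one_div, div_self hq0.ne', ENNReal.rpow_one]

end Aux

/-- Scaling property of the Besov quasinorm for `p ∈ (0,1)`, `q ∈ (0,∞]`,
`ν > d(1/p - 1)`: averaging `H(k+l, ·)` over balls of radius `2^{-k}` gains a factor
`2^{-γl}` with `γ = ν - d(1/p - 1)`, up to a constant depending only on `d, p, ν`. -/
theorem besov_scaling_p_lt_one {d : ℕ} (p : ℝ) (hp0 : 0 < p) (hp1 : p < 1)
    (q : ℝ≥0∞) (hq : 0 < q) (ν : ℝ) (hν : (d : ℝ) * (1 / p - 1) < ν) :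
    ∃ C : ℝ≥0∞, C ≠ ∞ ∧
      ∀ (H : ℕ → (Fin d → ℝ) → ℝ≥0∞), (∀ k, Measurable (H k)) →
      ∀ l : ℕ,
        besovNlt1 p q ν (fun k x => dyadicBallAvg k (H (k + l)) x)
          ≤ C * (2 : ℝ≥0∞) ^ (-((ν - (d : ℝ) * (1 / p - 1)) * l)) * besovNlt1 p q ν H := by
  refine ⟨(2:ℝ≥0∞) ^ ((3*(d:ℝ))/p), ENNReal.rpow_ne_top_of_nonneg (by positivity) (by norm_num), ?_⟩
  intro H hH l
  rw [besovNlt1, besovNlt1]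
  refine lq_shift q hq _ _ _ l fun k => ?_
  -- per-index estimate
  have hkey := key (d := d) hp0 hp1.le (hH (k+l)) k l
  rw [← dyadicBallAvg_eq_avgE, ← dyadicBallAvg_eq_avgE] at hkey
  have step1 : (2:ℝ≥0∞) ^ (ν * (k:ℝ)) *
      (∫⁻ x, (dyadicBallAvg k (fun x => dyadicBallAvg k (H (k+l)) x) x) ^ p) ^ (1/p) ≤
      ((2:ℝ≥0∞) ^ (ν * (k:ℝ)) *
        (2:ℝ≥0∞) ^ ((d:ℝ) - ((l:ℝ)+1)*(d:ℝ) + (((l:ℝ)+3)*(d:ℝ))/p)) *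
        (∫⁻ x, (dyadicBallAvg (k+l) (H (k+l)) x) ^ p) ^ (1/p) := by
    rw [mul_assoc]
    exact mul_le_mul_right hkey _
  refine step1.trans ?_
  rw [← mul_assoc]
  refine mul_le_mul_left ?_ _
  -- constant comparison, all powers of two
  rw [← ENNReal.rpow_add _ _ (by norm_num) (by norm_num),
    ← ENNReal.rpow_add _ _ (by norm_num) (by norm_num),
    ← ENNReal.rpow_add _ _ (by norm_num) (by norm_num)]
  refine ENNReal.rpow_le_rpow_of_exponent_le (by norm_num) (le_of_eq ?_)
  have hp0' : p ≠ 0 := hp0.ne'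
  field_simp
  push_cast
  ring
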